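/- Let p₁ < ⋯ < p_K define an ℓ-dense symmetric stingy quantum race with K ≥ 6ℓ. Then the collision probability in the coinciding equilibrium satisfies σ(T*)/z_{T*}² ≤ 6ℓ/K, and σ(T*) ≤ 196ℓ/K. -/

import Mathlib

open Finset

lemma sum_tele_aux (g : ℕ → ℝ) (T : ℕ) : ∀ K, T ≤ K →
    ∑ i ∈ Finset.Icc (T+1) K, (g (i-1) - g i) = g T - g K := by
  intro K hK
  induction K, hK using Nat.le_induction with
  | base =>
      rw [Finset.Icc_eq_empty (by omega)]
      simp
  | succ n hn ih =>
      rw [Finset.sum_Icc_succ_top (by omega), ih]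
      have h : n + 1 - 1 = n := by omega
      rw [h]
      ring

set_option maxHeartbeats 4000000 in
theorem stmt_10 (K : ℕ) (ℓ : ℝ) (p q r z σ : ℕ → ℝ) (Tstar : ℕ)
    (hK : 2 ≤ K)
    (hp1 : 0 < p 1) (hpK : p K ≤ 1)
    (hpmono : ∀ i j, 1 ≤ i → i < j → j ≤ K → p i < p j)
    (hℓ : 0 < ℓ)
    (hdense1 : p 1 ≤ ℓ / K)
    (hdense2 : p K ≥ 1 - ℓ / K)
    (hdense3 : ∀ i, 1 ≤ i → i ≤ K - 1 → p (i+1) - p i ≤ ℓ / K)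
    (hK6 : 6 * ℓ ≤ (K : ℝ))
    (hq : ∀ i, q i = (1 / p i) * (1 / p (i-1) - 1 / p i))
    (hr : ∀ T, r T = (1 / (1 - p T)) *
      (1 / p K - ∑ i ∈ Finset.Icc (T+1) K, (1 - p i) * q i))
    (hz : ∀ T, z T = r T + ∑ i ∈ Finset.Icc (T+1) K, q i)
    (hσ : ∀ T, σ T = (p T)^2 * (r T)^2 + ∑ i ∈ Finset.Icc (T+1) K, (p i)^2 * (q i)^2)
    (hT1 : 1 ≤ Tstar) (hT2 : Tstar ≤ K) (hT3 : 0 < r Tstar)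
    (hT4 : ∀ T, 1 ≤ T → T < Tstar → r T ≤ 0) :
    σ Tstar / (z Tstar)^2 ≤ 6 * ℓ / K ∧ σ Tstar ≤ 196 * ℓ / K := by
  have hK0 : (0:ℝ) < (K:ℝ) := by
    have : (2:ℝ) ≤ (K:ℝ) := by exact_mod_cast hK
    linarith
  obtain ⟨δ, hδdef⟩ : ∃ x : ℝ, x = ℓ / (K:ℝ) := ⟨_, rfl⟩
  rw [← hδdef] at hdense1 hdense2 hdense3
  have hδpos : 0 < δ := by rw [hδdef]; exact div_pos hℓ hK0
  have hδ6 : δ ≤ 1/6 := by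
    rw [hδdef, div_le_iff₀ hK0]; linarith
  have hple : ∀ i j, 1 ≤ i → i ≤ j → j ≤ K → p i ≤ p j := by
    intro i j h1 h2 h3
    rcases eq_or_lt_of_le h2 with h | h
    · rw [h]
    · exact (hpmono i j h1 h h3).le
  have hppos : ∀ i, 1 ≤ i → i ≤ K → 0 < p i := by
    intro i h1 h2
    exact lt_of_lt_of_le hp1 (hple 1 i le_rfl h1 h2)
  have hbpos : 0 < p K := hppos K (by omega) le_rfl
  have hb5 : 5/6 ≤ p K := by linarith [hdense2]
  have hd : ∀ i, 2 ≤ i → i ≤ K → p i - p (i-1) ≤ δ := by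
    intro i h2 hiK
    have h := hdense3 (i-1) (by omega) (by omega)
    have he : i - 1 + 1 = i := by omega
    rw [he] at h
    exact h
  -- Step 0: Tstar < K
  have hTK : Tstar < K := by
    by_contra hcon
    have hTK' : Tstar = K := by omega
    have ha'pos : 0 < p (K-1) := hppos _ (by omega) (by omega)
    have ha'b : p (K-1) < p K := hpmono (K-1) K (by omega) (by omega) le_rfl
    have hrK1 : r (K-1) ≤ 0 := hT4 (K-1) (by omega) (by omega)
    have hrr := hr (K-1)
    have he : K - 1 + 1 = K := by omega
    rw [he, Finset.Icc_self, Finset.sum_singleton] at hrr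
    have h1a : 0 < 1 - p (K-1) := by linarith
    have key : 1/p K - (1 - p K) * q K ≤ 0 := by
      by_contra hpos
      push_neg at hpos
      have : 0 < r (K-1) := by
        rw [hrr]
        exact mul_pos (by positivity) hpos
      linarith
    have hdK : p K - p (K-1) ≤ δ := hd K (by omega) le_rfl
    have h1b : 1 - p K ≤ δ := by linarith [hdense2]
    have ha'23 : 2/3 ≤ p (K-1) := by linarith
    rw [hq K] at key
    have hbne : p K ≠ 0 := ne_of_gt hbpos
    have ha'ne : p (K-1) ≠ 0 := ne_of_gt ha'pos
    have key2 : p (K-1) * p K ≤ (1 - p K) * (p K - p (K-1)) := by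
      have h0 : (1/p K - (1 - p K) * ((1/p K) * (1/p (K-1) - 1/p K))) * (p (K-1) * p K^2) ≤ 0 :=
        mul_nonpos_iff.mpr (Or.inr ⟨key, by positivity⟩)
      have he2 : (1/p K - (1 - p K) * ((1/p K) * (1/p (K-1) - 1/p K))) * (p (K-1) * p K^2)
          = p (K-1) * p K - (1 - p K) * (p K - p (K-1)) := by
        field_simp
        try ring
        try tauto
      rw [he2] at h0
      linarith
    have hb1 : p K ≤ 1 := hpK
    nlinarith [mul_le_mul h1b hdK (by linarith) (by linarith : (0:ℝ) ≤ δ),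
      mul_le_mul ha'23 hb5 (by norm_num) (by linarith : (0:ℝ) ≤ p (K-1))]
  -- abbreviations (opaque)
  obtain ⟨t, htdef⟩ : ∃ x : ℝ, x = p Tstar := ⟨_, rfl⟩
  obtain ⟨b, hbdef⟩ : ∃ x : ℝ, x = p K := ⟨_, rfl⟩
  have htpos : 0 < t := by rw [htdef]; exact hppos Tstar hT1 hT2
  have htb : t < b := by rw [htdef, hbdef]; exact hpmono Tstar K hT1 hTK le_rfl
  have hbb1 : b ≤ 1 := by rw [hbdef]; exact hpK
  have hbpos' : 0 < b := by rw [hbdef]; exact hbpos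
  have hb5' : 5/6 ≤ b := by rw [hbdef]; exact hb5
  have ht1 : t < 1 := lt_of_lt_of_le htb hbb1
  -- per element facts
  have hfacts : ∀ i ∈ Finset.Icc (Tstar+1) K,
      0 < p (i-1) ∧ p (i-1) < p i ∧ t ≤ p (i-1) ∧ p i - p (i-1) ≤ δ := by
    intro i hi
    rw [Finset.mem_Icc] at hi
    obtain ⟨hi1, hi2⟩ := hi
    have hpi1 : 0 < p (i-1) := hppos _ (by omega) (by omega)
    have hlt : p (i-1) < p i := hpmono (i-1) i (by omega) (by omega) hi2
    have hti : t ≤ p (i-1) := by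
      rw [htdef]
      rcases eq_or_lt_of_le (show Tstar ≤ i - 1 by omega) with h | h
      · exact le_of_eq (by rw [h])
      · exact (hpmono Tstar (i-1) hT1 h (by omega)).le
    exact ⟨hpi1, hlt, hti, hd i (by omega) hi2⟩
  -- telescoping sums
  have hPq : ∑ i ∈ Finset.Icc (Tstar+1) K, p i * q i = 1/t - 1/b := by
    have h1 : ∑ i ∈ Finset.Icc (Tstar+1) K, p i * q i
        = ∑ i ∈ Finset.Icc (Tstar+1) K, ((fun n => 1/p n) (i-1) - (fun n => 1/p n) i) := by
      apply Finset.sum_congr rfl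
      intro i hi
      obtain ⟨h1', h2', h3', h4'⟩ := hfacts i hi
      have hpi : 0 < p i := lt_trans h1' h2'
      have hne : p i ≠ 0 := ne_of_gt hpi
      have hne' : p (i-1) ≠ 0 := ne_of_gt h1'
      rw [hq i]
      field_simp
    rw [h1, sum_tele_aux (fun n => 1/p n) Tstar K hT2, htdef, hbdef]
  obtain ⟨Q, hQdef⟩ : ∃ x : ℝ, x = ∑ i ∈ Finset.Icc (Tstar+1) K, q i := ⟨_, rfl⟩
  obtain ⟨B, hBdef⟩ : ∃ x : ℝ, x = ∑ i ∈ Finset.Icc (Tstar+1) K, (p i)^2 * (q i)^2 := ⟨_, rfl⟩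
  have hQB : 2*Q + B = (1/t)^2 - (1/b)^2 := by
    rw [hQdef, hBdef]
    have h1 : 2*(∑ i ∈ Finset.Icc (Tstar+1) K, q i) + ∑ i ∈ Finset.Icc (Tstar+1) K, (p i)^2 * (q i)^2
        = ∑ i ∈ Finset.Icc (Tstar+1) K, (2 * q i + (p i)^2 * (q i)^2) := by
      rw [Finset.mul_sum, ← Finset.sum_add_distrib]
    have h2 : ∑ i ∈ Finset.Icc (Tstar+1) K, (2 * q i + (p i)^2 * (q i)^2)
        = ∑ i ∈ Finset.Icc (Tstar+1) K,
          ((fun n => (1/p n)^2) (i-1) - (fun n => (1/p n)^2) i) := by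
      apply Finset.sum_congr rfl
      intro i hi
      obtain ⟨h1', h2', h3', h4'⟩ := hfacts i hi
      have hpi : 0 < p i := lt_trans h1' h2'
      have hne : p i ≠ 0 := ne_of_gt hpi
      have hne' : p (i-1) ≠ 0 := ne_of_gt h1'
      rw [hq i]
      field_simp
      ring
    rw [h1, h2, sum_tele_aux (fun n => (1/p n)^2) Tstar K hT2, htdef, hbdef]
  have hsum2 : ∑ i ∈ Finset.Icc (Tstar+1) K, (1 - p i) * q i = Q - (1/t - 1/b) := by
    have h1 : ∑ i ∈ Finset.Icc (Tstar+1) K, (1 - p i) * q i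
        = ∑ i ∈ Finset.Icc (Tstar+1) K, (q i - p i * q i) := by
      apply Finset.sum_congr rfl; intro i _; ring
    rw [h1, Finset.sum_sub_distrib, hPq, hQdef]
  have h1t : (1:ℝ) - t ≠ 0 := by linarith
  have hrT : (1 - t) * r Tstar = 1/t - Q := by
    rw [hr Tstar, hsum2, ← htdef, ← hbdef]
    field_simp
    ring
  have hQnn : 0 ≤ Q := by
    rw [hQdef]
    apply Finset.sum_nonneg
    intro i hi
    obtain ⟨h1', h2', h3', h4'⟩ := hfacts i hi
    have hpi : 0 < p i := lt_trans h1' h2'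
    rw [hq i]
    have h1 : 1/p i ≤ 1/p (i-1) := one_div_le_one_div_of_le h1' h2'.le
    have h0 : 0 ≤ 1/p i := by positivity
    exact mul_nonneg h0 (by linarith)
  have hQlt : Q < 1/t := by
    have h := mul_pos (show (0:ℝ) < 1 - t by linarith) hT3
    linarith [hrT]
  have hBle : B ≤ (δ/t) * Q := by
    rw [hBdef, hQdef, Finset.mul_sum]
    apply Finset.sum_le_sum
    intro i hi
    obtain ⟨h1', h2', h3', h4'⟩ := hfacts i hi
    have hpi : 0 < p i := lt_trans h1' h2'
    have hqnn : 0 ≤ q i := by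
      rw [hq i]
      have h1 : 1/p i ≤ 1/p (i-1) := one_div_le_one_div_of_le h1' h2'.le
      have h0 : 0 ≤ 1/p i := by positivity
      exact mul_nonneg h0 (by linarith)
    have hkey : (p i)^2 * q i ≤ δ/t := by
      have he : (p i)^2 * q i = (p i - p (i-1)) / p (i-1) := by
        rw [hq i]
        field_simp
      rw [he]
      exact div_le_div₀ hδpos.le h4' htpos h3'
    calc (p i)^2 * (q i)^2 = ((p i)^2 * q i) * q i := by ring
      _ ≤ (δ/t) * q i := mul_le_mul_of_nonneg_right hkey hqnn
  have hB2 : B ≤ δ / t^2 := by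
    have h1 : (δ/t) * Q ≤ (δ/t) * (1/t) := by
      apply mul_le_mul_of_nonneg_left hQlt.le (by positivity)
    have h2 : (δ/t) * (1/t) = δ/t^2 := by ring
    linarith
  -- t > 1/3
  have hbb : (1/b)^2 ≤ 36/25 := by
    rw [div_pow, one_pow, div_le_div_iff₀ (by positivity) (by norm_num)]
    nlinarith [hb5', hbpos']
  have ht3 : 1/3 < t := by
    by_contra hcon
    push_neg at hcon
    have hw : 3 ≤ 1/t := by rw [le_div_iff₀ htpos]; linarith
    have h1 : (δ/t)*(1/t) = δ*(1/t)^2 := by ring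
    have h2 : B ≤ δ*(1/t)^2 := by
      have h3 := mul_le_mul_of_nonneg_left hQlt.le (show (0:ℝ) ≤ δ/t by positivity)
      linarith [hBle]
    nlinarith [sq_nonneg (1/t - 3), hδpos, hQB, hQlt, hbb, hδ6]
  -- Tstar ≥ 2
  have hT2' : 2 ≤ Tstar := by
    by_contra hcon
    have he1 : Tstar = 1 := by omega
    have : t ≤ δ := by rw [htdef, he1]; exact hdense1
    linarith
  obtain ⟨a, hadef⟩ : ∃ x : ℝ, x = p (Tstar - 1) := ⟨_, rfl⟩
  have hapos : 0 < a := by rw [hadef]; exact hppos _ (by omega) (by omega)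
  have hat : a < t := by
    rw [htdef, hadef]
    exact hpmono (Tstar-1) Tstar (by omega) (by omega) hT2
  have had : t - a ≤ δ := by
    have := hd Tstar (by omega) hT2
    rw [← htdef, ← hadef] at this
    exact this
  have ha6 : 1/6 < a := by linarith
  -- r Tstar ≤ q Tstar
  have hrT1 : r (Tstar - 1) ≤ 0 := hT4 _ (by omega) (by omega)
  have hrr := hr (Tstar - 1)
  have he : Tstar - 1 + 1 = Tstar := by omega
  rw [he] at hrr
  have hsplit : Finset.Icc Tstar K = insert Tstar (Finset.Icc (Tstar+1) K) := by
    rw [Finset.Icc_add_one_left_eq_Ioc, Finset.Ioc_insert_left hT2]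
  have hnotmem : Tstar ∉ Finset.Icc (Tstar+1) K := by
    simp [Finset.mem_Icc]
  have h1a : (1:ℝ) - a ≠ 0 := by linarith
  have hkey10 : (1 - a) * r (Tstar - 1) = (1 - t) * (r Tstar - q Tstar) := by
    rw [hrr, hsplit, Finset.sum_insert hnotmem, hsum2, ← hadef, ← htdef, ← hbdef]
    have e : 1/b - ((1 - t) * q Tstar + (Q - (1/t - 1/b)))
        = (1 - t) * (r Tstar - q Tstar) := by linear_combination -hrT
    rw [e, ← mul_assoc, mul_one_div_cancel h1a, one_mul]
  have hrle : r Tstar ≤ q Tstar := by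
    by_contra hcon
    push_neg at hcon
    have h0 : 0 < (1 - t) * (r Tstar - q Tstar) := by
      apply mul_pos (by linarith) (by linarith)
    nlinarith [mul_nonneg (show (0:ℝ) ≤ 1 - a by linarith)
      (show (0:ℝ) ≤ -(r (Tstar-1)) by linarith)]
  -- key bound: a * t^2 * r ≤ δ
  have hqT : a * t^2 * q Tstar = t - a := by
    rw [hq Tstar, ← hadef, ← htdef]
    field_simp
  have hH1 : a * t^2 * r Tstar ≤ δ := by
    have h1 : a * t^2 * r Tstar ≤ a * t^2 * q Tstar := by
      apply mul_le_mul_of_nonneg_left hrle (by positivity)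
    rw [hqT] at h1
    linarith
  -- t*r ≤ 18δ
  have htr0 : 0 < t * r Tstar := mul_pos htpos hT3
  have haux18 : (0:ℝ) ≤ a*t - 1/18 := by
    nlinarith [mul_nonneg hapos.le (show (0:ℝ) ≤ t - 1/3 by linarith)]
  have htr18 : t * r Tstar ≤ 18 * δ := by
    nlinarith [mul_nonneg haux18 htr0.le, hH1]
  -- z formula
  have hz' : z Tstar = 1/t + t * r Tstar := by
    rw [hz Tstar, ← hQdef]
    linear_combination hrT
  have hzpos : 0 < z Tstar := by
    rw [hz']
    have h0 : 0 < 1/t := by positivity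
    linarith
  have h1tz : 1/t ≤ z Tstar := by rw [hz']; linarith
  -- σ formula
  have hσT := hσ Tstar
  rw [← hBdef, ← htdef] at hσT
  -- Goal 2
  have hB9 : B ≤ 9 * δ := by
    have ht9 : (1:ℝ)/9 ≤ t^2 := by
      have h := mul_le_mul ht3.le ht3.le (by norm_num) htpos.le
      rw [pow_two]; linarith [h]
    have h1 : δ / t^2 ≤ 9 * δ := by
      rw [div_le_iff₀ (pow_pos htpos 2)]
      have h2 := mul_le_mul_of_nonneg_left ht9 (show (0:ℝ) ≤ 9*δ by linarith)
      linarith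
    linarith
  have hδδ : δ*δ ≤ (1/6)*δ := mul_le_mul_of_nonneg_right hδ6 hδpos.le
  have hgoal2 : σ Tstar ≤ 196 * δ := by
    rw [hσT]
    have s1 : (t * r Tstar)*(t * r Tstar) ≤ (18*δ)*(18*δ) :=
      mul_self_le_mul_self htr0.le htr18
    have s4 : t^2 * (r Tstar)^2 = (t * r Tstar)*(t * r Tstar) := by ring
    linarith [s1, hB9, hδδ, s4]
  -- Goal 1
  have hA : t * r Tstar ≤ (δ/t) * z Tstar := by
    have h7 : t^3 * r Tstar ≤ δ + δ * (t^2 * r Tstar) := by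
      have hm0 : (0:ℝ) ≤ t^2 * r Tstar := mul_nonneg (pow_nonneg htpos.le 2) hT3.le
      have m1 : (t - δ) * (t^2 * r Tstar) ≤ a * (t^2 * r Tstar) :=
        mul_le_mul_of_nonneg_right (by linarith) hm0
      have m2 : a * (t^2 * r Tstar) = a * t^2 * r Tstar := by ring
      have hm1 : (0:ℝ) ≤ δ * (t^2 * r Tstar) := mul_nonneg hδpos.le hm0
      linarith [m1, hH1, hm1]
    have h8 : (δ/t) * z Tstar = δ/t^2 + δ * r Tstar := by
      rw [hz']
      field_simp
    rw [h8]
    have h9 : (t * r Tstar - δ * r Tstar) * t^2 ≤ δ := by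
      have e9 : (t * r Tstar - δ * r Tstar) * t^2 = t^3 * r Tstar - δ * (t^2 * r Tstar) := by
        ring
      rw [e9]; linarith [h7]
    have h10 : t * r Tstar - δ * r Tstar ≤ δ/t^2 := by
      rw [le_div_iff₀ (by positivity)]; linarith [h9]
    linarith
  have hA2 : (t * r Tstar)^2 ≤ ((δ/t) * z Tstar)^2 :=
    pow_le_pow_left₀ htr0.le hA 2
  have hδt : δ/t ≤ 3*δ := by
    rw [div_le_iff₀ htpos]
    have := mul_le_mul_of_nonneg_left ht3.le (show (0:ℝ) ≤ 3*δ by linarith)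
    linarith [this]
  have h92 : (δ/t)^2 ≤ (3/2)*δ := by
    have w1 : (δ/t)*(δ/t) ≤ (3*δ)*(3*δ) :=
      mul_self_le_mul_self (div_nonneg hδpos.le htpos.le) hδt
    rw [pow_two]
    linarith [w1, hδδ]
  have hBz : B ≤ δ * z Tstar^2 := by
    have h1 : (1/t)^2 ≤ z Tstar^2 := pow_le_pow_left₀ (by positivity) h1tz 2
    have h2 : δ/t^2 = δ*(1/t)^2 := by ring
    have h3 := mul_le_mul_of_nonneg_left h1 hδpos.le
    linarith [hB2, h3]
  constructor
  · rw [show 6*ℓ/(K:ℝ) = 6*δ from by rw [hδdef]; ring,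
      div_le_iff₀ (pow_pos hzpos 2)]
    rw [hσT]
    have e1 : ((δ/t) * z Tstar)^2 = (δ/t)^2 * z Tstar^2 := by ring
    have e2 : t^2 * (r Tstar)^2 = (t * r Tstar)^2 := by ring
    have m := mul_le_mul_of_nonneg_right h92 (sq_nonneg (z Tstar))
    have n1 : (0:ℝ) ≤ δ * z Tstar^2 := mul_nonneg hδpos.le (sq_nonneg _)
    linarith [hA2, hBz, m, e1, e2, n1]
  · rw [show 196*ℓ/(K:ℝ) = 196*δ from by rw [hδdef]; ring]
    exact hgoal2
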